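/- Let γ := 2/(2+ω) and define M := (1/γ)·[[A, 0],[D, C_τ]] and N := [[0, Dᵀ],[0, 0]] + ((1−γ)/γ)·[[A, 0],[D, C_τ]]. If qᵀDv ≤ √ω ‖v‖_A ‖q‖_C for all v, q, then the spectral radius of M⁻¹N satisfies ρ(M⁻¹N) ≤ ω/(ω+2), and ω/(ω+2) < 1. -/

import Mathlib

open Matrix Complex

section helpers
variable {m n : ℕ}

private lemma cdot_re (P : Matrix (Fin m) (Fin n) ℝ) (w : Fin m → ℂ) (z : Fin n → ℂ) :
    (w ⬝ᵥ (P.map (algebraMap ℝ ℂ)) *ᵥ z).re =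
      (fun i => (w i).re) ⬝ᵥ P *ᵥ (fun j => (z j).re)
        - (fun i => (w i).im) ⬝ᵥ P *ᵥ (fun j => (z j).im) := by
  simp only [dotProduct, mulVec, Matrix.map_apply, Finset.mul_sum, ← Finset.sum_sub_distrib,
    Complex.re_sum]
  refine Finset.sum_congr rfl fun i _ => ?_
  refine Finset.sum_congr rfl fun j _ => ?_
  simp [Complex.mul_re, Complex.mul_im]

private lemma cdot_im (P : Matrix (Fin m) (Fin n) ℝ) (w : Fin m → ℂ) (z : Fin n → ℂ) :
    (w ⬝ᵥ (P.map (algebraMap ℝ ℂ)) *ᵥ z).im =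
      (fun i => (w i).re) ⬝ᵥ P *ᵥ (fun j => (z j).im)
        + (fun i => (w i).im) ⬝ᵥ P *ᵥ (fun j => (z j).re) := by
  simp only [dotProduct, mulVec, Matrix.map_apply, Finset.mul_sum, ← Finset.sum_add_distrib,
    Complex.im_sum]
  refine Finset.sum_congr rfl fun i _ => ?_
  refine Finset.sum_congr rfl fun j _ => ?_
  simp [Complex.mul_re, Complex.mul_im]

private lemma re_cmulVec (P : Matrix (Fin m) (Fin n) ℝ) (z : Fin n → ℂ) (i : Fin m) :
    (((P.map (algebraMap ℝ ℂ)) *ᵥ z) i).re = (P *ᵥ (fun j => (z j).re)) i := by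
  simp [mulVec, dotProduct, Complex.re_sum, Complex.mul_re]

private lemma im_cmulVec (P : Matrix (Fin m) (Fin n) ℝ) (z : Fin n → ℂ) (i : Fin m) :
    (((P.map (algebraMap ℝ ℂ)) *ᵥ z) i).im = (P *ᵥ (fun j => (z j).im)) i := by
  simp [mulVec, dotProduct, Complex.im_sum, Complex.mul_im]

private lemma dot_transpose (P : Matrix (Fin m) (Fin n) ℝ) (x : Fin n → ℝ) (y : Fin m → ℝ) :
    x ⬝ᵥ Pᵀ *ᵥ y = y ⬝ᵥ P *ᵥ x := by
  rw [dotProduct_mulVec, vecMul_transpose, dotProduct_comm]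

private lemma dot_symm {P : Matrix (Fin n) (Fin n) ℝ} (hP : Pᵀ = P) (x y : Fin n → ℝ) :
    x ⬝ᵥ P *ᵥ y = y ⬝ᵥ P *ᵥ x := by
  conv_lhs => rw [← hP]
  exact dot_transpose P x y

private lemma negdot (f : Fin n → ℝ) (u : Fin n → ℝ) :
    (fun i => -(f i)) ⬝ᵥ u = -(f ⬝ᵥ u) := by
  simp [dotProduct, Finset.sum_neg_distrib]

private lemma couple_bound (A : Matrix (Fin m) (Fin m) ℝ)
    (C Cτ B : Matrix (Fin n) (Fin n) ℝ) (D : Matrix (Fin n) (Fin m) ℝ)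
    (τ ω : ℝ) (hτ : 0 < τ) (hω : 0 < ω) (hA : A.PosDef) (hB : B.PosDef) (hC : C.PosDef)
    (hCτ : Cτ = C + τ • B)
    (hcoup : ∀ v q, q ⬝ᵥ D *ᵥ v ≤ Real.sqrt ω * Real.sqrt (v ⬝ᵥ A *ᵥ v) * Real.sqrt (q ⬝ᵥ C *ᵥ q))
    (v : Fin m → ℝ) (q : Fin n → ℝ) (h : Cτ *ᵥ q = -(D *ᵥ v)) :
    q ⬝ᵥ Cτ *ᵥ q ≤ ω * (v ⬝ᵥ A *ᵥ v) := by
  have hCq : (0:ℝ) ≤ q ⬝ᵥ C *ᵥ q := by simpa only [star_trivial] using hC.posSemidef.dotProduct_mulVec_nonneg q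
  have hBq : (0:ℝ) ≤ q ⬝ᵥ B *ᵥ q := by simpa only [star_trivial] using hB.posSemidef.dotProduct_mulVec_nonneg q
  have hAv : (0:ℝ) ≤ v ⬝ᵥ A *ᵥ v := by simpa only [star_trivial] using hA.posSemidef.dotProduct_mulVec_nonneg v
  set t := q ⬝ᵥ Cτ *ᵥ q with ht
  have htval : t = q ⬝ᵥ C *ᵥ q + τ * (q ⬝ᵥ B *ᵥ q) := by
    rw [ht, hCτ, add_mulVec, dotProduct_add, smul_mulVec, dotProduct_smul, smul_eq_mul]
  have ht0 : q ⬝ᵥ C *ᵥ q ≤ t := by nlinarith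
  have hDv : q ⬝ᵥ D *ᵥ (-v) = t := by
    rw [mulVec_neg, dotProduct_neg, ht]
    have := congrArg (fun w => q ⬝ᵥ w) h
    simp only [dotProduct_neg] at this
    exact this.symm
  have key : t ≤ Real.sqrt ω * Real.sqrt (v ⬝ᵥ A *ᵥ v) * Real.sqrt (q ⬝ᵥ C *ᵥ q) := by
    have := hcoup (-v) q
    have hneg : (-v) ⬝ᵥ A *ᵥ (-v) = v ⬝ᵥ A *ᵥ v := by
      simp [mulVec_neg, dotProduct_neg, neg_dotProduct]
    rw [hDv, hneg] at this
    exact this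
  have hsC : Real.sqrt (q ⬝ᵥ C *ᵥ q) ≤ Real.sqrt ω * Real.sqrt (v ⬝ᵥ A *ᵥ v) := by
    rcases eq_or_lt_of_le hCq with h0 | h0
    · rw [← h0, Real.sqrt_zero]
      positivity
    · have h1 : Real.sqrt (q ⬝ᵥ C *ᵥ q) * Real.sqrt (q ⬝ᵥ C *ᵥ q) ≤
          (Real.sqrt ω * Real.sqrt (v ⬝ᵥ A *ᵥ v)) * Real.sqrt (q ⬝ᵥ C *ᵥ q) := by
        rw [Real.mul_self_sqrt hCq]
        calc q ⬝ᵥ C *ᵥ q ≤ t := ht0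
        _ ≤ _ := key
      exact le_of_mul_le_mul_right h1 (Real.sqrt_pos.mpr h0)
  calc t ≤ Real.sqrt ω * Real.sqrt (v ⬝ᵥ A *ᵥ v) * Real.sqrt (q ⬝ᵥ C *ᵥ q) := key
  _ ≤ Real.sqrt ω * Real.sqrt (v ⬝ᵥ A *ᵥ v) * (Real.sqrt ω * Real.sqrt (v ⬝ᵥ A *ᵥ v)) := by
      apply mul_le_mul_of_nonneg_left hsC
      positivity
  _ = ω * (v ⬝ᵥ A *ᵥ v) := by
      rw [mul_mul_mul_comm, Real.mul_self_sqrt hω.le, Real.mul_self_sqrt hAv]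

end helpers

/-- The `M`-weighted norm `‖x‖_M = √(xᵀ M x)`. -/
noncomputable def mnorm {n : ℕ} (M : Matrix (Fin n) (Fin n) ℝ) (x : Fin n → ℝ) : ℝ :=
  Real.sqrt (x ⬝ᵥ M.mulVec x)

theorem stmt_4 {nu np : ℕ} (hnu : 0 < nu) (hnp : 0 < np)
    (A : Matrix (Fin nu) (Fin nu) ℝ)
    (B C : Matrix (Fin np) (Fin np) ℝ)
    (D : Matrix (Fin np) (Fin nu) ℝ) (τ ω γ : ℝ)
    (hτ : 0 < τ) (hω : 0 < ω) (hγ : γ = 2 / (2 + ω))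
    (hA : A.PosDef) (hB : B.PosDef) (hC : C.PosDef)
    (hcoup : ∀ (v : Fin nu → ℝ) (q : Fin np → ℝ),
      q ⬝ᵥ D.mulVec v ≤ Real.sqrt ω * mnorm A v * mnorm C q)
    (M N : Matrix (Fin nu ⊕ Fin np) (Fin nu ⊕ Fin np) ℝ)
    (hM : M = (1 / γ) • fromBlocks A 0 D (C + τ • B))
    (hN : N = fromBlocks 0 Dᵀ 0 0 + ((1 - γ) / γ) • fromBlocks A 0 D (C + τ • B)) :
    (∀ μ ∈ spectrum ℂ ((M⁻¹ * N).map (algebraMap ℝ ℂ)), ‖μ‖ ≤ ω / (ω + 2)) ∧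
      ω / (ω + 2) < 1 := by
  have h2ω : (0:ℝ) < 2 + ω := by linarith
  have hγ0 : 0 < γ := by rw [hγ]; positivity
  have hγ1 : γ < 1 := by rw [hγ, div_lt_one h2ω]; linarith
  have hfrac : 1 - γ = ω / (ω + 2) := by
    rw [hγ, eq_div_iff (by linarith : ω + 2 ≠ 0), sub_mul,
      show ω + 2 = 2 + ω by ring, div_mul_cancel₀ _ (ne_of_gt h2ω)]
    ring
  refine ⟨?_, by rw [div_lt_one (by linarith)]; linarith⟩
  intro μ hμ
  -- basic matrices
  set Cτ : Matrix (Fin np) (Fin np) ℝ := C + τ • B with hCτdef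
  have hτB : (τ • B).PosDef := by
    refine Matrix.PosDef.of_dotProduct_mulVec_pos ?_ fun x hx => ?_
    · unfold Matrix.IsHermitian
      rw [conjTranspose_smul]
      rw [hB.1]
      simp
    · rw [smul_mulVec, dotProduct_smul, smul_eq_mul]
      exact mul_pos hτ (hB.dotProduct_mulVec_pos hx)
  have hCτ : Cτ.PosDef := hC.add hτB
  have hCτsymm : Cτᵀ = Cτ := by
    have := hCτ.1
    ext i j
    have h1 := congrFun (congrFun this i) j
    simpa [conjTranspose_apply] using h1
  set K : Matrix (Fin nu ⊕ Fin np) (Fin nu ⊕ Fin np) ℝ := fromBlocks A 0 D Cτ with hK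
  have hKdet : IsUnit K.det := by
    rw [hK, det_fromBlocks_zero₁₂]
    exact isUnit_iff_ne_zero.mpr (ne_of_gt (mul_pos hA.det_pos hCτ.det_pos))
  have hMdet : IsUnit M.det := by
    rw [hM, det_smul]
    exact (isUnit_iff_ne_zero.mpr (pow_ne_zero _ (by positivity))).mul hKdet
  -- get eigenvector
  rw [spectrum.mem_iff] at hμ
  rw [Algebra.algebraMap_eq_smul_one, Matrix.isUnit_iff_isUnit_det, isUnit_iff_ne_zero,
    not_not] at hμ
  obtain ⟨x, hx0, hxS⟩ := (Matrix.exists_mulVec_eq_zero_iff).mpr hμ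
  have hTx : ((M⁻¹ * N).map (algebraMap ℝ ℂ)) *ᵥ x = μ • x := by
    rw [sub_mulVec, smul_mulVec, one_mulVec, sub_eq_zero] at hxS
    exact hxS.symm
  -- multiply by M
  have hNx : (N.map (algebraMap ℝ ℂ)) *ᵥ x = μ • ((M.map (algebraMap ℝ ℂ)) *ᵥ x) := by
    have h1 : (M.map (algebraMap ℝ ℂ)) *ᵥ (((M⁻¹ * N).map (algebraMap ℝ ℂ)) *ᵥ x)
        = (N.map (algebraMap ℝ ℂ)) *ᵥ x := by
      rw [mulVec_mulVec, ← Matrix.map_mul, ← mul_assoc, Matrix.mul_nonsing_inv _ hMdet, one_mul]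
    rw [hTx, mulVec_smul] at h1
    exact h1.symm
  -- decompose M, N
  have hMmap : M.map (algebraMap ℝ ℂ) = (((1/γ : ℝ)):ℂ) • (K.map (algebraMap ℝ ℂ)) := by
    rw [hM]
    ext i j
    simp [Matrix.map_apply, Matrix.smul_apply, smul_eq_mul]
  have hNmap : N.map (algebraMap ℝ ℂ) = (fromBlocks 0 Dᵀ 0 0 :
      Matrix (Fin nu ⊕ Fin np) (Fin nu ⊕ Fin np) ℝ).map (algebraMap ℝ ℂ)
      + ((((1-γ)/γ : ℝ)):ℂ) • (K.map (algebraMap ℝ ℂ)) := by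
    rw [hN]
    ext i j
    simp [Matrix.map_apply, Matrix.add_apply, Matrix.smul_apply, smul_eq_mul]
  set lam : ℂ := (μ - ((1-γ : ℝ):ℂ)) / ((γ:ℝ):ℂ) with hlam
  have hγC : ((γ:ℝ):ℂ) ≠ 0 := by
    simpa using ne_of_gt hγ0
  have hE : ((fromBlocks 0 Dᵀ 0 0 :
      Matrix (Fin nu ⊕ Fin np) (Fin nu ⊕ Fin np) ℝ).map (algebraMap ℝ ℂ)) *ᵥ x
      = lam • ((K.map (algebraMap ℝ ℂ)) *ᵥ x) := by
    rw [hNmap, hMmap] at hNx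
    rw [add_mulVec, smul_mulVec] at hNx
    have h2 : (((fromBlocks 0 Dᵀ 0 0 :
        Matrix (Fin nu ⊕ Fin np) (Fin nu ⊕ Fin np) ℝ).map (algebraMap ℝ ℂ)) *ᵥ x)
        = (μ * ((1/γ:ℝ):ℂ) - (((1-γ)/γ:ℝ):ℂ)) • ((K.map (algebraMap ℝ ℂ)) *ᵥ x) := by
      rw [sub_smul]
      rw [smul_mulVec, smul_smul] at hNx
      linear_combination (norm := module) hNx
    rw [h2]
    congr 1
    rw [hlam]
    push_cast
    field_simp
  -- block decomposition of K and E maps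
  have hKb : K.map (algebraMap ℝ ℂ) = fromBlocks (A.map (algebraMap ℝ ℂ)) 0
      (D.map (algebraMap ℝ ℂ)) (Cτ.map (algebraMap ℝ ℂ)) := by
    rw [hK, fromBlocks_map, Matrix.map_zero _ (map_zero _)]
  have hEb : (fromBlocks 0 Dᵀ 0 0 :
      Matrix (Fin nu ⊕ Fin np) (Fin nu ⊕ Fin np) ℝ).map (algebraMap ℝ ℂ)
      = fromBlocks 0 (Dᵀ.map (algebraMap ℝ ℂ)) 0 0 := by
    rw [fromBlocks_map, Matrix.map_zero _ (map_zero _), Matrix.map_zero _ (map_zero _),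
      Matrix.map_zero _ (map_zero _)]
  rw [hKb, hEb, fromBlocks_mulVec, fromBlocks_mulVec] at hE
  have h1 : ∀ i, ((Dᵀ.map (algebraMap ℝ ℂ)) *ᵥ (x ∘ Sum.inr)) i
      = lam * (((A.map (algebraMap ℝ ℂ)) *ᵥ (x ∘ Sum.inl)) i) := by
    intro i
    have h := congrFun hE (Sum.inl i)
    simpa [zero_mulVec, Pi.add_apply, Pi.smul_apply, smul_eq_mul] using h
  have h2 : ∀ i, (0:ℂ) = lam * (((D.map (algebraMap ℝ ℂ)) *ᵥ (x ∘ Sum.inl)) i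
      + ((Cτ.map (algebraMap ℝ ℂ)) *ᵥ (x ∘ Sum.inr)) i) := by
    intro i
    have h := congrFun hE (Sum.inr i)
    simpa [zero_mulVec, Pi.add_apply, Pi.smul_apply, smul_eq_mul] using h
  rcases eq_or_ne lam 0 with hl0 | hl0
  · -- μ = 1 - γ
    have hμval : μ = ((1-γ : ℝ):ℂ) := by
      rw [hlam, div_eq_zero_iff] at hl0
      rcases hl0 with h | h
      · exact sub_eq_zero.mp h
      · exact absurd h hγC
    rw [hμval]
    rw [Complex.norm_real, Real.norm_eq_abs]
    rw [_root_.abs_of_nonneg (by linarith : (0:ℝ) ≤ 1 - γ), hfrac]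
  · -- lam ≠ 0 case
    have h2' : ∀ i, ((D.map (algebraMap ℝ ℂ)) *ᵥ (x ∘ Sum.inl)) i
        + ((Cτ.map (algebraMap ℝ ℂ)) *ᵥ (x ∘ Sum.inr)) i = 0 := by
      intro i
      rcases mul_eq_zero.mp (h2 i).symm with h | h
      · exact absurd h hl0
      · exact h
    obtain ⟨vr, hvr⟩ : ∃ v : Fin nu → ℝ, v = fun j => ((x ∘ Sum.inl) j).re := ⟨_, rfl⟩
    obtain ⟨vi, hvi⟩ : ∃ v : Fin nu → ℝ, v = fun j => ((x ∘ Sum.inl) j).im := ⟨_, rfl⟩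
    obtain ⟨qr, hqr⟩ : ∃ v : Fin np → ℝ, v = fun j => ((x ∘ Sum.inr) j).re := ⟨_, rfl⟩
    obtain ⟨qi, hqi⟩ : ∃ v : Fin np → ℝ, v = fun j => ((x ∘ Sum.inr) j).im := ⟨_, rfl⟩
    have hr1 : Cτ *ᵥ qr = -(D *ᵥ vr) := by
      rw [hvr, hqr]
      funext i
      have h := congrArg Complex.re (h2' i)
      rw [Complex.add_re, re_cmulVec, re_cmulVec, Complex.zero_re] at h
      simp only [Pi.neg_apply]
      linarith
    have hr2 : Cτ *ᵥ qi = -(D *ᵥ vi) := by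
      rw [hvi, hqi]
      funext i
      have h := congrArg Complex.im (h2' i)
      rw [Complex.add_im, im_cmulVec, im_cmulVec, Complex.zero_im] at h
      simp only [Pi.neg_apply]
      linarith
    have hcoup' : ∀ v q, q ⬝ᵥ D *ᵥ v ≤
        Real.sqrt ω * Real.sqrt (v ⬝ᵥ A *ᵥ v) * Real.sqrt (q ⬝ᵥ C *ᵥ q) := by
      intro v q
      simpa [mnorm] using hcoup v q
    have hb1 : qr ⬝ᵥ Cτ *ᵥ qr ≤ ω * (vr ⬝ᵥ A *ᵥ vr) :=
      couple_bound A C Cτ B D τ ω hτ hω hA hB hC hCτdef hcoup' vr qr hr1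
    have hb2 : qi ⬝ᵥ Cτ *ᵥ qi ≤ ω * (vi ⬝ᵥ A *ᵥ vi) :=
      couple_bound A C Cτ B D τ ω hτ hω hA hB hC hCτdef hcoup' vi qi hr2
    have hASymm : Aᵀ = A := by
      have := hA.1
      ext i j
      have h1 := congrFun (congrFun this i) j
      simpa [conjTranspose_apply] using h1
    have hrr1 : D *ᵥ vr = -(Cτ *ᵥ qr) := by rw [hr1, neg_neg]
    have hrr2 : D *ᵥ vi = -(Cτ *ᵥ qi) := by rw [hr2, neg_neg]
    set t : ℝ := qr ⬝ᵥ Cτ *ᵥ qr + qi ⬝ᵥ Cτ *ᵥ qi with htdef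
    set a : ℝ := vr ⬝ᵥ A *ᵥ vr + vi ⬝ᵥ A *ᵥ vi with hadef
    -- the key scalar identity
    have hw : ∃ w : Fin nu → ℂ, w = fun i => (starRingEnd ℂ) ((x ∘ Sum.inl) i) := ⟨_, rfl⟩
    obtain ⟨w, hwdef⟩ := hw
    have hdot : w ⬝ᵥ ((Dᵀ.map (algebraMap ℝ ℂ)) *ᵥ (x ∘ Sum.inr))
        = lam * (w ⬝ᵥ ((A.map (algebraMap ℝ ℂ)) *ᵥ (x ∘ Sum.inl))) := by
      have hfun : (Dᵀ.map (algebraMap ℝ ℂ)) *ᵥ (x ∘ Sum.inr)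
          = fun i => lam * (((A.map (algebraMap ℝ ℂ)) *ᵥ (x ∘ Sum.inl)) i) := funext h1
      rw [hfun]
      simp only [dotProduct, Finset.mul_sum]
      exact Finset.sum_congr rfl fun i _ => by ring
    have hwre : (fun i => (w i).re) = vr := by
      rw [hwdef, hvr]; funext i; simp
    have hwim : (fun i => (w i).im) = fun i => -(vi i) := by
      rw [hwdef, hvi]; funext i; simp
    have hLHS : w ⬝ᵥ ((Dᵀ.map (algebraMap ℝ ℂ)) *ᵥ (x ∘ Sum.inr)) = ((-t : ℝ) : ℂ) := by
      apply Complex.ext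
      · rw [cdot_re, hwre, hwim, ← hqr, ← hqi, negdot, dot_transpose, dot_transpose,
          hrr1, hrr2, Complex.ofReal_re]
        rw [htdef]
        simp only [dotProduct_neg]
        ring
      · rw [cdot_im, hwre, hwim, ← hqr, ← hqi, negdot, dot_transpose, dot_transpose,
          hrr1, hrr2, Complex.ofReal_im]
        simp only [dotProduct_neg]
        rw [dot_symm hCτsymm qi qr]
        ring
    have hRHS : w ⬝ᵥ ((A.map (algebraMap ℝ ℂ)) *ᵥ (x ∘ Sum.inl)) = ((a : ℝ) : ℂ) := by
      apply Complex.ext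
      · rw [cdot_re, hwre, hwim, ← hvr, ← hvi, negdot, Complex.ofReal_re, hadef]
        ring
      · rw [cdot_im, hwre, hwim, ← hvr, ← hvi, negdot, Complex.ofReal_im]
        rw [dot_symm hASymm vr vi]
        ring
    have hkey : ((-t : ℝ) : ℂ) = lam * ((a : ℝ) : ℂ) := by
      rw [← hLHS, ← hRHS, hdot]
    -- nonnegativity facts
    have ht1 : 0 ≤ qr ⬝ᵥ Cτ *ᵥ qr := by simpa only [star_trivial] using hCτ.posSemidef.dotProduct_mulVec_nonneg qr
    have ht2 : 0 ≤ qi ⬝ᵥ Cτ *ᵥ qi := by simpa only [star_trivial] using hCτ.posSemidef.dotProduct_mulVec_nonneg qi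
    have ha1 : 0 ≤ vr ⬝ᵥ A *ᵥ vr := by simpa only [star_trivial] using hA.posSemidef.dotProduct_mulVec_nonneg vr
    have ha2 : 0 ≤ vi ⬝ᵥ A *ᵥ vi := by simpa only [star_trivial] using hA.posSemidef.dotProduct_mulVec_nonneg vi
    -- a ≠ 0
    have hane : a ≠ 0 := by
      intro ha0
      have hvr0 : vr = 0 := by
        by_contra hne
        have := hA.dotProduct_mulVec_pos hne
        simp only [star_trivial] at this
        nlinarith
      have hvi0 : vi = 0 := by
        by_contra hne
        have := hA.dotProduct_mulVec_pos hne
        simp only [star_trivial] at this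
        nlinarith
      have hqr0 : qr = 0 := by
        by_contra hne
        have hpos := hCτ.dotProduct_mulVec_pos hne
        simp only [star_trivial] at hpos
        have : Cτ *ᵥ qr = 0 := by rw [hr1, hvr0, mulVec_zero, neg_zero]
        rw [this, dotProduct_zero] at hpos
        exact lt_irrefl _ hpos
      have hqi0 : qi = 0 := by
        by_contra hne
        have hpos := hCτ.dotProduct_mulVec_pos hne
        simp only [star_trivial] at hpos
        have : Cτ *ᵥ qi = 0 := by rw [hr2, hvi0, mulVec_zero, neg_zero]
        rw [this, dotProduct_zero] at hpos
        exact lt_irrefl _ hpos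
      apply hx0
      funext s
      cases s with
      | inl i =>
          have h2'' : (x (Sum.inl i)).im = 0 := by
            have := congrFun hvi0 i
            rw [hvi] at this
            simpa using this
          have h1'' : (x (Sum.inl i)).re = 0 := by
            have := congrFun hvr0 i
            rw [hvr] at this
            simpa using this
          exact Complex.ext h1'' h2''
      | inr i =>
          have h1'' : (x (Sum.inr i)).re = 0 := by
            have := congrFun hqr0 i
            rw [hqr] at this
            simpa using this
          have h2'' : (x (Sum.inr i)).im = 0 := by
            have := congrFun hqi0 i
            rw [hqi] at this
            simpa using this
          exact Complex.ext h1'' h2''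
    have hapos : 0 < a := lt_of_le_of_ne (by rw [hadef]; positivity) (Ne.symm hane)
    -- λ and μ values
    have hlamval : lam = ((-t / a : ℝ) : ℂ) := by
      rw [Complex.ofReal_div]
      rw [eq_div_iff (by simpa using hane : ((a:ℝ):ℂ) ≠ 0)]
      exact hkey.symm
    have hμval : μ = (((1 - γ) + γ * (-t / a) : ℝ) : ℂ) := by
      have hmul : ((γ:ℝ):ℂ) * lam = μ - ((1-γ : ℝ):ℂ) := by
        rw [hlam, mul_div_cancel₀ _ hγC]
      rw [hlamval] at hmul
      push_cast at hmul ⊢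
      linear_combination -hmul
    rw [hμval, Complex.norm_real, Real.norm_eq_abs]
    -- final bound
    have htω : t ≤ ω * a := by rw [htdef, hadef, mul_add]; exact add_le_add hb1 hb2
    have ht0 : 0 ≤ t := by rw [htdef]; linarith
    have hγ2 : γ * (2 + ω) = 2 := by
      rw [hγ, div_mul_cancel₀ _ (ne_of_gt h2ω)]
    have hgw : γ * ω = 2 * (1 - γ) := by linear_combination hγ2
    have hs1 : t / a ≤ ω := (div_le_iff₀ hapos).mpr (by linarith)
    have hs0 : 0 ≤ t / a := div_nonneg ht0 hapos.le
    have hub : γ * (t / a) ≤ 2 * (1 - γ) := by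
      have := mul_le_mul_of_nonneg_left hs1 hγ0.le
      linarith
    have hlb : 0 ≤ γ * (t / a) := mul_nonneg hγ0.le hs0
    have hneg : 1 - γ + γ * (-t / a) = 1 - γ - γ * (t / a) := by ring
    rw [← hfrac, _root_.abs_le, hneg]
    constructor
    · linarith
    · linarith
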